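/- For positive integers t ≤ k with t ≤ log k and k sufficiently large, the number SP_{t,k} of set partitions of {1,…,k} with every block of size at most t satisfies SP_{t,k} ≤ exp(k·log k − (k/t)·log k − k·log t + 3k). -/

import Mathlib

open Finset

section SP14Aux

lemma SP14_log_bound {k t m : ℕ} (ht : 1 ≤ t) (htk : (t : ℝ) ≤ Real.log k)
    (hm1 : 1 ≤ m) (hmk : m ≤ k) (hktm : k ≤ t * m) :
    ((k : ℝ) - m) * Real.log m + k * Real.log 2 ≤
      (k : ℝ) * Real.log k - ((k : ℝ) / t) * Real.log k - k * Real.log t + 3 * k := by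
  have hm0 : (0 : ℝ) < m := by exact_mod_cast hm1
  have ht0 : (0 : ℝ) < t := by exact_mod_cast ht
  have hk0 : (0 : ℝ) < k := lt_of_lt_of_le hm0 (by exact_mod_cast hmk)
  have hktm' : (k : ℝ) ≤ t * m := by exact_mod_cast hktm
  have E1 : Real.log k - Real.log m ≤ (k : ℝ) / m - 1 := by
    have h := Real.log_le_sub_one_of_pos (div_pos hk0 hm0)
    rwa [Real.log_div hk0.ne' hm0.ne'] at h
  have F1 : (m : ℝ) * Real.log k - m * Real.log m ≤ k - m := by
    have h := mul_le_mul_of_nonneg_left E1 hm0.le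
    have h2 : (m : ℝ) * ((k : ℝ) / m - 1) = k - m := by field_simp
    nlinarith [h]
  have E2 : Real.log t + Real.log m - Real.log k ≤ (t : ℝ) * m / k - 1 := by
    have h := Real.log_le_sub_one_of_pos (div_pos (mul_pos ht0 hm0) hk0)
    rwa [Real.log_div (mul_pos ht0 hm0).ne' hk0.ne', Real.log_mul ht0.ne' hm0.ne'] at h
  have F2 : (k : ℝ) * Real.log t + k * Real.log m - k * Real.log k ≤ t * m - k := by
    have h := mul_le_mul_of_nonneg_left E2 hk0.le
    have h2 : (k : ℝ) * ((t : ℝ) * m / k - 1) = t * m - k := by field_simp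
    nlinarith [h]
  have F3 : ((k : ℝ) / t) * Real.log k - m * Real.log k ≤ k - t * m := by
    have hc : (k : ℝ) / t - m ≤ 0 := by
      rw [sub_nonpos, div_le_iff₀ ht0]
      linarith [hktm']
    have h := mul_le_mul_of_nonpos_left htk hc
    have h2 : ((k : ℝ) / t - m) * t = k - t * m := by field_simp
    nlinarith [h]
  have F4 : (k : ℝ) * Real.log 2 ≤ k := by
    have : Real.log 2 ≤ 1 := by
      have := Real.log_le_sub_one_of_pos (by norm_num : (0:ℝ) < 2); linarith
    nlinarith [hk0]
  linarith [F1, F2, F3, F4]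

variable {k : ℕ}

/-- The map sending each element to the minimum of its block. -/
def SP14_minMap (P : Finpartition (univ : Finset (Fin k))) (x : Fin k) : Fin k :=
  (P.part x).min' (P.nonempty_of_mem_parts (P.part_mem.mpr (mem_univ x)))

lemma SP14_minMap_mem (P : Finpartition (univ : Finset (Fin k))) (x : Fin k) :
    SP14_minMap P x ∈ P.part x := Finset.min'_mem _ _

lemma SP14_part_eq_iff_min (P : Finpartition (univ : Finset (Fin k))) (z x : Fin k) :
    P.part z = P.part x ↔ SP14_minMap P z = SP14_minMap P x := by
  constructor
  · intro h
    simp only [SP14_minMap]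
    congr 1
  · intro h
    have h1 : SP14_minMap P z ∈ P.part z := SP14_minMap_mem P z
    have h2 : SP14_minMap P z ∈ P.part x := h ▸ SP14_minMap_mem P x
    exact P.eq_of_mem_parts (P.part_mem.mpr (mem_univ z)) (P.part_mem.mpr (mem_univ x)) h1 h2

lemma SP14_minMap_idem (P : Finpartition (univ : Finset (Fin k))) (x : Fin k) :
    SP14_minMap P (SP14_minMap P x) = SP14_minMap P x := by
  rw [← SP14_part_eq_iff_min]
  exact P.part_eq_of_mem (P.part_mem.mpr (mem_univ x)) (SP14_minMap_mem P x)

lemma SP14_minMap_fiber (P : Finpartition (univ : Finset (Fin k))) (x₀ : Fin k) :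
    univ.filter (fun x => SP14_minMap P x = SP14_minMap P x₀) = P.part x₀ := by
  ext z
  simp only [mem_filter, mem_univ, true_and]
  rw [← SP14_part_eq_iff_min, ← P.mem_part_iff_part_eq_part (mem_univ z) (mem_univ x₀)]

lemma SP14_minMap_inj {P P' : Finpartition (univ : Finset (Fin k))}
    (h : SP14_minMap P = SP14_minMap P') : P = P' := by
  have key : ∀ (Q Q' : Finpartition (univ : Finset (Fin k))), SP14_minMap Q = SP14_minMap Q' →
      ∀ B ∈ Q.parts, B ∈ Q'.parts := by
    intro Q Q' hQ B hB
    obtain ⟨x, hx⟩ := Q.nonempty_of_mem_parts hB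
    have hBx : B = Q.part x := (Q.part_eq_of_mem hB hx).symm
    have hpp : Q.part x = Q'.part x := by
      ext z
      rw [Q.mem_part_iff_part_eq_part (mem_univ z) (mem_univ x),
        Q'.mem_part_iff_part_eq_part (mem_univ z) (mem_univ x),
        SP14_part_eq_iff_min, SP14_part_eq_iff_min, hQ]
    rw [hBx, hpp]
    exact Q'.part_mem.mpr (mem_univ x)
  ext B
  exact ⟨key P P' h B, key P' P h.symm B⟩

lemma SP14_card_partitions_le (k t : ℕ) (hk : 1 ≤ k) :
    Nat.card {P : Finpartition (univ : Finset (Fin k)) // ∀ B ∈ P.parts, B.card ≤ t} ≤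
      ∑ M ∈ (univ : Finset (Fin k)).powerset.filter (fun M => k ≤ t * M.card),
        M.card ^ (k - M.card) := by
  classical
  set pred : (Fin k → Fin k) → Prop := fun f =>
    (∀ x, f (f x) = f x) ∧ ∀ y, (univ.filter (fun x => f x = y)).card ≤ t with hpred
  have step1 : Nat.card {P : Finpartition (univ : Finset (Fin k)) //
      ∀ B ∈ P.parts, B.card ≤ t} ≤ (univ.filter pred).card := by
    have : Nat.card {f : Fin k → Fin k // pred f} = (univ.filter pred).card := by
      rw [Nat.card_eq_fintype_card, Fintype.card_subtype]
    rw [← this]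
    apply Nat.card_le_card_of_injective
      (f := fun P => (⟨SP14_minMap P.1, ?_, ?_⟩ : {f : Fin k → Fin k // pred f}))
    · intro P P' hPP'
      have := congrArg Subtype.val hPP'
      exact Subtype.ext (SP14_minMap_inj this)
    · exact fun x => SP14_minMap_idem P.1 x
    · intro y
      by_cases hy : (univ.filter (fun x => SP14_minMap P.1 x = y)).Nonempty
      · obtain ⟨x₀, hx₀⟩ := hy
        rw [mem_filter] at hx₀
        have : (univ.filter (fun x => SP14_minMap P.1 x = y)) = P.1.part x₀ := by
          rw [← SP14_minMap_fiber P.1 x₀]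
          ext z
          simp only [mem_filter, mem_univ, true_and, hx₀.2]
        rw [this]
        exact P.2 _ (P.1.part_mem.mpr (mem_univ x₀))
      · rw [not_nonempty_iff_eq_empty] at hy
        simp [hy]
  refine le_trans step1 ?_
  have step2 : (univ.filter pred).card =
      ∑ M ∈ (univ : Finset (Fin k)).powerset.filter (fun M => k ≤ t * M.card),
        ((univ.filter pred).filter (fun f => univ.image f = M)).card := by
    apply Finset.card_eq_sum_card_fiberwise
    intro f hf
    simp only [Finset.mem_coe] at hf ⊢
    rw [mem_filter] at hf
    rw [mem_filter, mem_powerset]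
    refine ⟨subset_univ _, ?_⟩
    have hcard : (univ : Finset (Fin k)).card =
        ∑ y ∈ univ.image f, (univ.filter (fun x => f x = y)).card :=
      Finset.card_eq_sum_card_fiberwise (fun x _ => mem_image_of_mem f (mem_univ x))
    have : (univ : Finset (Fin k)).card ≤ (univ.image f).card * t := by
      rw [hcard, ← smul_eq_mul, ← Finset.sum_const]
      exact Finset.sum_le_sum fun y _ => hf.2.2 y
    simpa [card_univ, Nat.mul_comm] using this
  rw [step2]
  apply Finset.sum_le_sum
  intro M hM
  rw [mem_filter, mem_powerset] at hM
  by_cases hne : ((univ.filter pred).filter (fun f => univ.image f = M)).Nonempty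
  · have hMne : M.Nonempty := by
      obtain ⟨f₀, hf₀⟩ := hne
      rw [mem_filter] at hf₀
      rw [← hf₀.2]
      haveI : Nonempty (Fin k) := ⟨⟨0, hk⟩⟩
      exact univ_nonempty.image f₀
    obtain ⟨y₀, hy₀⟩ := hMne
    set φ : (Fin k → Fin k) → ({a : Fin k // a ∈ Mᶜ} → {b : Fin k // b ∈ M}) := fun f x =>
      if h : f x.1 ∈ M then ⟨f x.1, h⟩ else ⟨y₀, hy₀⟩ with hφ
    have := Finset.card_le_card_of_injOn
      (s := (univ.filter pred).filter (fun f => univ.image f = M))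
      (t := (univ : Finset ({a : Fin k // a ∈ Mᶜ} → {b : Fin k // b ∈ M})))
      φ (fun f _ => mem_univ _) ?_
    · refine le_trans this ?_
      rw [card_univ, Fintype.card_fun, Fintype.card_coe, Fintype.card_coe, card_compl,
        Fintype.card_fin]
    · intro f hf g hg hfg
      simp only [coe_filter, Set.mem_setOf_eq, mem_filter] at hf hg
      have hfix : ∀ h : Fin k → Fin k, pred h → univ.image h = M → ∀ x ∈ M, h x = x := by
        intro h hh himg x hx
        rw [← himg, mem_image] at hx
        obtain ⟨x₀, -, hx₀⟩ := hx
        rw [← hx₀, hh.1]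
      funext x
      by_cases hx : x ∈ M
      · rw [hfix f hf.1.2 hf.2 x hx, hfix g hg.1.2 hg.2 x hx]
      · have hfx : f x ∈ M := by rw [← hf.2]; exact mem_image_of_mem f (mem_univ x)
        have hgx : g x ∈ M := by rw [← hg.2]; exact mem_image_of_mem g (mem_univ x)
        have := congrFun hfg ⟨x, mem_compl.mpr hx⟩
        simp only [hφ, hfx, hgx, dif_pos] at this
        exact Subtype.ext_iff.mp this
  · rw [not_nonempty_iff_eq_empty] at hne
    simp [hne]

end SP14Aux

theorem stmt_14 :
    ∃ k₀ : ℕ, ∀ k : ℕ, k₀ ≤ k → ∀ t : ℕ, 1 ≤ t → (t : ℝ) ≤ Real.log k →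
      (Nat.card {P : Finpartition (Finset.univ : Finset (Fin k)) //
          ∀ B ∈ P.parts, B.card ≤ t} : ℝ) ≤
        Real.exp ((k : ℝ) * Real.log k - ((k : ℝ) / t) * Real.log k -
          (k : ℝ) * Real.log t + 3 * k) := by
  refine ⟨1, fun k hk t ht htk => ?_⟩
  set T : ℝ := (k : ℝ) * Real.log k - ((k : ℝ) / t) * Real.log k -
      (k : ℝ) * Real.log t + 3 * k with hT
  set S := (univ : Finset (Fin k)).powerset.filter (fun M => k ≤ t * M.card) with hS
  have hcast : (Nat.card {P : Finpartition (Finset.univ : Finset (Fin k)) //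
      ∀ B ∈ P.parts, B.card ≤ t} : ℝ) ≤ ∑ M ∈ S, ((M.card : ℝ)) ^ (k - M.card) := by
    have := SP14_card_partitions_le k t hk
    calc (Nat.card {P : Finpartition (Finset.univ : Finset (Fin k)) //
        ∀ B ∈ P.parts, B.card ≤ t} : ℝ)
        ≤ ((∑ M ∈ S, M.card ^ (k - M.card) : ℕ) : ℝ) := by exact_mod_cast this
      _ = ∑ M ∈ S, ((M.card : ℝ)) ^ (k - M.card) := by push_cast; rfl
  refine le_trans hcast ?_
  have hterm : ∀ M ∈ S, ((M.card : ℝ)) ^ (k - M.card) ≤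
      Real.exp (T - k * Real.log 2) := by
    intro M hM
    rw [hS, mem_filter, mem_powerset] at hM
    have hmk : M.card ≤ k := by
      simpa [card_univ] using Finset.card_le_card hM.1
    have hm1 : 1 ≤ M.card := by
      by_contra h
      push_neg at h
      interval_cases h' : M.card <;> omega
    have hm0 : (0 : ℝ) < M.card := by exact_mod_cast hm1
    have : ((M.card : ℝ)) ^ (k - M.card) =
        Real.exp (((k - M.card : ℕ) : ℝ) * Real.log M.card) := by
      rw [Real.exp_nat_mul, Real.exp_log hm0]
    rw [this, Real.exp_le_exp, Nat.cast_sub hmk, hT]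
    have hlog := SP14_log_bound ht htk hm1 hmk hM.2
    linarith [hlog]
  calc ∑ M ∈ S, ((M.card : ℝ)) ^ (k - M.card)
      ≤ ∑ _M ∈ S, Real.exp (T - k * Real.log 2) := Finset.sum_le_sum hterm
    _ = S.card * Real.exp (T - k * Real.log 2) := by
        rw [Finset.sum_const, nsmul_eq_mul]
    _ ≤ (2 : ℝ) ^ k * Real.exp (T - k * Real.log 2) := by
        apply mul_le_mul_of_nonneg_right _ (Real.exp_pos _).le
        have : S.card ≤ 2 ^ k := by
          calc S.card ≤ (univ : Finset (Fin k)).powerset.card :=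
              Finset.card_le_card (Finset.filter_subset _ _)
            _ = 2 ^ k := by rw [Finset.card_powerset, card_univ, Fintype.card_fin]
        exact_mod_cast this
    _ = Real.exp T := by
        rw [Real.exp_sub, Real.exp_nat_mul, Real.exp_log (by norm_num : (0:ℝ) < 2)]
        field_simp
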